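/- Let T, S be bounded linear operators on a complex Hilbert space H and t ∈ (0,1). Then w²(T*S) ≤ (1/(2(1+t)))‖|T|² + |S|²‖ w(T*S) + (t/(4(1+t)))‖|T|⁴ + |S|⁴‖ + (t/(2(1+t))) w(|S|²|T|²). -/

import Mathlib

set_option maxHeartbeats 1000000

open scoped InnerProductSpace
open Set Filter

variable {H : Type*} [NormedAddCommGroup H] [InnerProductSpace ℂ H] [CompleteSpace H]

lemma my_buzano (u v e : H) (he : ‖e‖ = 1) :
    ‖⟪u, e⟫_ℂ * ⟪e, v⟫_ℂ‖ ≤ (‖u‖ * ‖v‖ + ‖⟪u, v⟫_ℂ‖) / 2 := by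
  set w : H := ((2 : ℂ) * ⟪e, v⟫_ℂ) • e - v with hwdef
  have hee : ⟪e, e⟫_ℂ = 1 := by
    rw [inner_self_eq_norm_sq_to_K, he]; norm_num
  have hinner : ⟪w, w⟫_ℂ = ⟪v, v⟫_ℂ := by
    simp only [hwdef, inner_sub_left, inner_sub_right, inner_smul_left, inner_smul_right, hee,
      map_mul]
    rw [← inner_conj_symm v e]
    simp only [map_ofNat]
    ring
  have hnw : ‖w‖ = ‖v‖ := by
    have h2 := hinner
    rw [inner_self_eq_norm_sq_to_K, inner_self_eq_norm_sq_to_K] at h2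
    norm_cast at h2
    nlinarith [norm_nonneg w, norm_nonneg v]
  have huw : ⟪u, w⟫_ℂ = 2 * ⟪e, v⟫_ℂ * ⟪u, e⟫_ℂ - ⟪u, v⟫_ℂ := by
    simp [hwdef, inner_sub_right, inner_smul_right]
  have key : 2 * ‖⟪u, e⟫_ℂ * ⟪e, v⟫_ℂ‖ ≤ ‖u‖ * ‖v‖ + ‖⟪u, v⟫_ℂ‖ := by
    have h1 : ‖⟪u, w⟫_ℂ‖ ≤ ‖u‖ * ‖v‖ := by
      calc ‖⟪u, w⟫_ℂ‖ ≤ ‖u‖ * ‖w‖ := norm_inner_le_norm u w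
        _ = ‖u‖ * ‖v‖ := by rw [hnw]
    calc 2 * ‖⟪u, e⟫_ℂ * ⟪e, v⟫_ℂ‖ = ‖⟪u, w⟫_ℂ + ⟪u, v⟫_ℂ‖ := by
          rw [huw]; rw [show 2 * ⟪e, v⟫_ℂ * ⟪u, e⟫_ℂ - ⟪u, v⟫_ℂ + ⟪u, v⟫_ℂ
            = 2 * (⟪u, e⟫_ℂ * ⟪e, v⟫_ℂ) by ring]
          simp [norm_mul]
      _ ≤ ‖⟪u, w⟫_ℂ‖ + ‖⟪u, v⟫_ℂ‖ := norm_add_le _ _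
      _ ≤ ‖u‖ * ‖v‖ + ‖⟪u, v⟫_ℂ‖ := by linarith
  linarith

/-- The numerical radius of a bounded linear operator. -/
noncomputable def numRad (T : H →L[ℂ] H) : ℝ :=
  ⨆ x : {x : H // ‖x‖ = 1}, ‖(⟪T x, x⟫_ℂ)‖

lemma numRad_nonneg (T : H →L[ℂ] H) : 0 ≤ numRad T :=
  Real.iSup_nonneg fun _ => norm_nonneg _

lemma le_numRad (T : H →L[ℂ] H) {x : H} (hx : ‖x‖ = 1) : ‖⟪T x, x⟫_ℂ‖ ≤ numRad T := by
  have hbdd : BddAbove (Set.range fun y : {x : H // ‖x‖ = 1} => ‖⟪T y.1, y.1⟫_ℂ‖) := by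
    refine ⟨‖T‖, ?_⟩
    rintro r ⟨y, rfl⟩
    calc ‖⟪T y.1, y.1⟫_ℂ‖ ≤ ‖T y.1‖ * ‖y.1‖ := norm_inner_le_norm _ _
      _ ≤ (‖T‖ * ‖y.1‖) * ‖y.1‖ := by
          exact mul_le_mul_of_nonneg_right (T.le_opNorm y.1) (norm_nonneg _)
      _ = ‖T‖ := by rw [y.2]; ring
  exact le_ciSup hbdd (⟨x, hx⟩ : {x : H // ‖x‖ = 1})

lemma numRad_le_of_forall (T : H →L[ℂ] H) {a : ℝ} (ha : 0 ≤ a)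
    (h : ∀ x : H, ‖x‖ = 1 → ‖⟪T x, x⟫_ℂ‖ ≤ a) : numRad T ≤ a :=
  Real.iSup_le (fun y => h y.1 y.2) ha

/-- The absolute value `|T| = (T*T)^(1/2)` of a bounded linear operator. -/
noncomputable def opAbs (T : H →L[ℂ] H) : H →L[ℂ] H := CFC.sqrt (star T * T)

lemma opAbs_sq (T : H →L[ℂ] H) : opAbs T ^ 2 = star T * T :=
  CFC.sq_sqrt (star T * T) (star_mul_self_nonneg T)

lemma adj_star_mul_self (R : H →L[ℂ] H) :
    ContinuousLinearMap.adjoint (star R * R) = star R * R := by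
  rw [← ContinuousLinearMap.star_eq_adjoint]
  exact (IsSelfAdjoint.star_mul_self R).star_eq

lemma inner_star_mul_self (R : H →L[ℂ] H) (x : H) :
    ⟪(star R * R) x, x⟫_ℂ = ((‖R x‖ : ℂ)) ^ 2 := by
  rw [ContinuousLinearMap.mul_apply, ContinuousLinearMap.star_eq_adjoint,
    ContinuousLinearMap.adjoint_inner_left, inner_self_eq_norm_sq_to_K]
  norm_cast

lemma inner_star_mul_self_sq (R : H →L[ℂ] H) (x : H) :
    ⟪((star R * R) ^ 2) x, x⟫_ℂ = ((‖(star R * R) x‖ : ℂ)) ^ 2 := by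
  have h := ContinuousLinearMap.adjoint_inner_left (star R * R) x ((star R * R) x)
  rw [adj_star_mul_self] at h
  rw [pow_two, ContinuousLinearMap.mul_apply, h, inner_self_eq_norm_sq_to_K]
  norm_cast

theorem stmt8 (T S : H →L[ℂ] H) (t : ℝ) (ht : t ∈ Ioo (0:ℝ) 1) :
    numRad (star T * S) ^ 2 ≤
      (1 / (2 * (1 + t))) * ‖opAbs T ^ 2 + opAbs S ^ 2‖ * numRad (star T * S) +
      (t / (4 * (1 + t))) * ‖opAbs T ^ 4 + opAbs S ^ 4‖ +
      (t / (2 * (1 + t))) * numRad (opAbs S ^ 2 * opAbs T ^ 2) := by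
  obtain ⟨ht0, ht1⟩ := ht
  have h1t : (0:ℝ) < 1 + t := by linarith
  have hA : opAbs T ^ 2 = star T * T := opAbs_sq T
  have hB : opAbs S ^ 2 = star S * S := opAbs_sq S
  have hA4 : opAbs T ^ 4 = (star T * T) ^ 2 := by
    rw [← hA, ← pow_mul]
  have hB4 : opAbs S ^ 4 = (star S * S) ^ 2 := by
    rw [← hB, ← pow_mul]
  set w : ℝ := numRad (star T * S) with hw
  set N1 : ℝ := ‖opAbs T ^ 2 + opAbs S ^ 2‖ with hN1
  set N2 : ℝ := ‖opAbs T ^ 4 + opAbs S ^ 4‖ with hN2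
  set w0 : ℝ := numRad (opAbs S ^ 2 * opAbs T ^ 2) with hw0
  set C : ℝ := (1 / (2 * (1 + t))) * N1 * w + (t / (4 * (1 + t))) * N2
      + (t / (2 * (1 + t))) * w0 with hC
  have hwnn : 0 ≤ w := numRad_nonneg _
  have hw0nn : 0 ≤ w0 := numRad_nonneg _
  have hC0 : 0 ≤ C := by
    have c1 : (0:ℝ) ≤ 1 / (2 * (1 + t)) := by positivity
    have c2 : (0:ℝ) ≤ t / (4 * (1 + t)) := by positivity
    have c3 : (0:ℝ) ≤ t / (2 * (1 + t)) := by positivity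
    have := norm_nonneg (opAbs T ^ 2 + opAbs S ^ 2)
    have := norm_nonneg (opAbs T ^ 4 + opAbs S ^ 4)
    refine add_nonneg (add_nonneg ?_ ?_) ?_ <;>
      first
        | exact mul_nonneg (mul_nonneg c1 (by assumption)) hwnn
        | exact mul_nonneg c2 (by assumption)
        | exact mul_nonneg c3 hw0nn
  -- pointwise claim
  have claim : ∀ x : H, ‖x‖ = 1 → ‖⟪(star T * S) x, x⟫_ℂ‖ ^ 2 ≤ C := by
    intro x hx
    set p : ℝ := ‖⟪(star T * S) x, x⟫_ℂ‖ with hpdef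
    have hpnn : 0 ≤ p := norm_nonneg _
    have hpw : p ≤ w := le_numRad _ hx
    have hp1 : ⟪(star T * S) x, x⟫_ℂ = ⟪S x, T x⟫_ℂ := by
      rw [ContinuousLinearMap.mul_apply, ContinuousLinearMap.star_eq_adjoint,
        ContinuousLinearMap.adjoint_inner_left]
    have hpab : p ≤ ‖S x‖ * ‖T x‖ := by
      rw [hpdef, hp1]; exact norm_inner_le_norm _ _
    -- sum of squares bound
    have hsum : ‖T x‖ ^ 2 + ‖S x‖ ^ 2 ≤ N1 := by
      have h1 : ⟪(opAbs T ^ 2 + opAbs S ^ 2) x, x⟫_ℂ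
          = ((‖T x‖ ^ 2 + ‖S x‖ ^ 2 : ℝ) : ℂ) := by
        rw [ContinuousLinearMap.add_apply, inner_add_left, hA, hB,
          inner_star_mul_self, inner_star_mul_self]
        push_cast; ring
      calc ‖T x‖ ^ 2 + ‖S x‖ ^ 2
          = ‖⟪(opAbs T ^ 2 + opAbs S ^ 2) x, x⟫_ℂ‖ := by
            rw [h1, Complex.norm_real, Real.norm_eq_abs, abs_of_nonneg (by positivity)]
        _ ≤ ‖(opAbs T ^ 2 + opAbs S ^ 2) x‖ * ‖x‖ := norm_inner_le_norm _ _
        _ ≤ (N1 * ‖x‖) * ‖x‖ :=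
            mul_le_mul_of_nonneg_right ((opAbs T ^ 2 + opAbs S ^ 2).le_opNorm x)
              (norm_nonneg _)
        _ = N1 := by rw [hx]; ring
    -- sum of fourth powers bound
    have hsum4 : ‖(star T * T) x‖ ^ 2 + ‖(star S * S) x‖ ^ 2 ≤ N2 := by
      have h1 : ⟪(opAbs T ^ 4 + opAbs S ^ 4) x, x⟫_ℂ
          = ((‖(star T * T) x‖ ^ 2 + ‖(star S * S) x‖ ^ 2 : ℝ) : ℂ) := by
        rw [ContinuousLinearMap.add_apply, inner_add_left, hA4, hB4,
          inner_star_mul_self_sq, inner_star_mul_self_sq]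
        push_cast; ring
      calc ‖(star T * T) x‖ ^ 2 + ‖(star S * S) x‖ ^ 2
          = ‖⟪(opAbs T ^ 4 + opAbs S ^ 4) x, x⟫_ℂ‖ := by
            rw [h1, Complex.norm_real, Real.norm_eq_abs, abs_of_nonneg (by positivity)]
        _ ≤ ‖(opAbs T ^ 4 + opAbs S ^ 4) x‖ * ‖x‖ := norm_inner_le_norm _ _
        _ ≤ (N2 * ‖x‖) * ‖x‖ :=
            mul_le_mul_of_nonneg_right ((opAbs T ^ 4 + opAbs S ^ 4).le_opNorm x)
              (norm_nonneg _)
        _ = N2 := by rw [hx]; ring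
    -- cross term
    have hABx : ⟪(opAbs S ^ 2 * opAbs T ^ 2) x, x⟫_ℂ
        = ⟪(star T * T) x, (star S * S) x⟫_ℂ := by
      have h := ContinuousLinearMap.adjoint_inner_left (star S * S) x ((star T * T) x)
      rw [adj_star_mul_self] at h
      rw [hA, hB, ContinuousLinearMap.mul_apply, h]
    have hcross : ‖⟪(star T * T) x, (star S * S) x⟫_ℂ‖ ≤ w0 := by
      rw [← hABx]; exact le_numRad _ hx
    -- Buzano
    have hbuz := my_buzano ((star T * T) x) ((star S * S) x) x hx
    have hlhs : ‖⟪(star T * T) x, x⟫_ℂ * ⟪x, (star S * S) x⟫_ℂ‖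
        = ‖T x‖ ^ 2 * ‖S x‖ ^ 2 := by
      rw [← inner_conj_symm x ((star S * S) x), inner_star_mul_self,
        inner_star_mul_self, ← Complex.ofReal_pow, ← Complex.ofReal_pow,
        Complex.conj_ofReal]
      rw [← Complex.ofReal_mul, Complex.norm_real, Real.norm_eq_abs,
        abs_of_nonneg (by positivity)]
    rw [hlhs] at hbuz
    have hprod : ‖(star T * T) x‖ * ‖(star S * S) x‖ ≤ N2 / 2 := by
      nlinarith [sq_nonneg (‖(star T * T) x‖ - ‖(star S * S) x‖)]
    have hb2 : p ^ 2 ≤ N2 / 4 + w0 / 2 := by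
      nlinarith [mul_self_le_mul_self hpnn hpab, hbuz, hprod, hcross]
    have hamgm : ‖S x‖ * ‖T x‖ ≤ N1 / 2 := by
      nlinarith [sq_nonneg (‖T x‖ - ‖S x‖), hsum]
    have hb1 : p ^ 2 ≤ N1 / 2 * p := by
      have h := mul_le_mul_of_nonneg_right (hpab.trans hamgm) hpnn
      nlinarith [h]
    have hN1nn : (0:ℝ) ≤ N1 := norm_nonneg _
    have h1' : p ^ 2 ≤ N1 / 2 * w :=
      le_trans hb1 (mul_le_mul_of_nonneg_left hpw (by positivity))
    have h2' : t * p ^ 2 ≤ t * (N2 / 4 + w0 / 2) :=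
      mul_le_mul_of_nonneg_left hb2 ht0.le
    have hkey : p ^ 2 * (1 + t) ≤ 1 / 2 * N1 * w + t / 4 * N2 + t / 2 * w0 := by
      linarith
    have : p ^ 2 ≤ (1 / 2 * N1 * w + t / 4 * N2 + t / 2 * w0) / (1 + t) :=
      (le_div_iff₀ h1t).mpr hkey
    calc p ^ 2 ≤ (1 / 2 * N1 * w + t / 4 * N2 + t / 2 * w0) / (1 + t) := this
      _ = C := by rw [hC]; field_simp
  -- conclude
  have hwle : w ≤ Real.sqrt C := by
    refine numRad_le_of_forall _ (Real.sqrt_nonneg C) (fun x hx => ?_)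
    have h := claim x hx
    calc ‖⟪(star T * S) x, x⟫_ℂ‖
        = Real.sqrt (‖⟪(star T * S) x, x⟫_ℂ‖ ^ 2) :=
          (Real.sqrt_sq (norm_nonneg _)).symm
      _ ≤ Real.sqrt C := Real.sqrt_le_sqrt h
  calc w ^ 2 ≤ Real.sqrt C ^ 2 := pow_le_pow_left₀ hwnn hwle 2
    _ = C := Real.sq_sqrt hC0
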